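/- For every positive integer n, the polynomial identity holds: sum over i from 1 to n of (q^{i-1} + q^i + q^{i+1})·([i]_q)^3 plus sum over i from 1 to n of (q^{i-1}[i-1]_q + q^i)·([i]_q)^2 equals ([n+1]_q)^2 · ([n]_q)^2. -/

import Mathlib

open Polynomial

/-- The q-analogue [m]_q = 1 + q + ... + q^{m-1} as a polynomial in q = X. -/
noncomputable def qa (m : ℕ) : Polynomial ℤ := ∑ j ∈ Finset.range m, X ^ j

lemma qa_succ (m : ℕ) : qa (m + 1) = qa m + X ^ m := by
  simp [qa, Finset.sum_range_succ]

lemma qa_geom (m : ℕ) : (X : Polynomial ℤ) ^ m = (X - 1) * qa m + 1 := by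
  have h := geom_sum_mul (X : Polynomial ℤ) m
  unfold qa
  linear_combination -h

theorem q_analogue_sum_cubes (n : ℕ) (hn : 0 < n) :
    (∑ i ∈ Finset.Icc 1 n,
        ((X : Polynomial ℤ) ^ (i - 1) + X ^ i + X ^ (i + 1)) * (qa i) ^ 3)
      + (∑ i ∈ Finset.Icc 1 n,
        ((X : Polynomial ℤ) ^ (i - 1) * qa (i - 1) + X ^ i) * (qa i) ^ 2)
      = (qa (n + 1)) ^ 2 * (qa n) ^ 2 := by
  induction n with
  | zero => omega
  | succ n ih =>
    rcases Nat.eq_zero_or_pos n with rfl | hn'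
    · simp [qa, Finset.sum_range_succ]
      ring
    · rw [Finset.sum_Icc_succ_top (by omega), Finset.sum_Icc_succ_top (by omega),
        add_add_add_comm, ih hn']
      have h1 : n + 1 - 1 = n := rfl
      rw [h1, qa_succ (n+1), qa_succ n, show n+2 = n+1+1 from rfl,
        pow_succ (X : Polynomial ℤ) (n+1), pow_succ (X : Polynomial ℤ) n, qa_geom n]
      ring
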